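/- arXiv:1902.10419 — 2 statements merged into one kernel-verified Lean document; each statement's English description precedes it below -/
import Mathlib

section
/- Cauchy interlacing theorem: if A is a real symmetric n×n matrix and B is an m×m principal submatrix of A (m < n), then the eigenvalues of B interlace those of A: λ_i(A) ≥ λ_i(B) ≥ λ_{n-m+i}(A) for i = 1,…,m, where eigenvalues are ordered decreasingly. -/
open Matrix Finset Submodule

section helpers

variable {N : ℕ} {C : Matrix (Fin N) (Fin N) ℝ}

lemma aux_apply (hC : C.IsHermitian) (j : Fin N) :
    Matrix.toEuclideanLin C (hC.eigenvectorBasis j) = hC.eigenvalues j • hC.eigenvectorBasis j := by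
  ext k
  simp [Matrix.toEuclideanLin_apply, hC.mulVec_eigenvectorBasis]

lemma quad_repr (hC : C.IsHermitian) (x : EuclideanSpace ℝ (Fin N)) :
    (inner ℝ x (Matrix.toEuclideanLin C x) : ℝ)
      = ∑ j, hC.eigenvalues j * (inner ℝ (hC.eigenvectorBasis j) x : ℝ) ^ 2 := by
  have hsym := (Matrix.isHermitian_iff_isSymmetric.1 hC)
  have hx := hC.eigenvectorBasis.sum_repr' x
  nth_rewrite 1 [← hx]
  rw [sum_inner]
  refine Finset.sum_congr rfl fun j _ => ?_
  rw [real_inner_smul_left, ← hsym (hC.eigenvectorBasis j) x, aux_apply hC j,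
    real_inner_smul_left]
  ring

lemma norm_repr (hC : C.IsHermitian) (x : EuclideanSpace ℝ (Fin N)) :
    (inner ℝ x x : ℝ) = ∑ j, (inner ℝ (hC.eigenvectorBasis j) x : ℝ) ^ 2 := by
  have hx := hC.eigenvectorBasis.sum_repr' x
  nth_rewrite 1 [← hx]
  rw [sum_inner]
  refine Finset.sum_congr rfl fun j _ => ?_
  rw [real_inner_smul_left]
  ring

lemma coeff_zero (hC : C.IsHermitian) (s : Finset (Fin N)) {x : EuclideanSpace ℝ (Fin N)}
    (hx : x ∈ span ℝ (hC.eigenvectorBasis '' ↑s)) {j : Fin N} (hj : j ∉ s) :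
    (inner ℝ (hC.eigenvectorBasis j) x : ℝ) = 0 := by
  induction hx using Submodule.span_induction with
  | mem y hy =>
    obtain ⟨k, hk, rfl⟩ := hy
    exact hC.eigenvectorBasis.orthonormal.2 (fun h => hj (h ▸ hk))
  | zero => simp
  | add y z _ _ hy hz => rw [inner_add_right, hy, hz]; ring
  | smul a y _ hy => rw [real_inner_smul_right, hy]; ring

lemma quad_ge (hC : C.IsHermitian) (s : Finset (Fin N)) (c : ℝ)
    (hc : ∀ j ∈ s, c ≤ hC.eigenvalues j) {x : EuclideanSpace ℝ (Fin N)}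
    (hx : x ∈ span ℝ (hC.eigenvectorBasis '' ↑s)) :
    c * (inner ℝ x x : ℝ) ≤ (inner ℝ x (Matrix.toEuclideanLin C x) : ℝ) := by
  rw [quad_repr hC, norm_repr hC, Finset.mul_sum]
  refine Finset.sum_le_sum fun j _ => ?_
  by_cases hj : j ∈ s
  · exact mul_le_mul_of_nonneg_right (hc j hj) (sq_nonneg _)
  · rw [coeff_zero hC s hx hj]; simp

lemma quad_le (hC : C.IsHermitian) (s : Finset (Fin N)) (c : ℝ)
    (hc : ∀ j ∈ s, hC.eigenvalues j ≤ c) {x : EuclideanSpace ℝ (Fin N)}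
    (hx : x ∈ span ℝ (hC.eigenvectorBasis '' ↑s)) :
    (inner ℝ x (Matrix.toEuclideanLin C x) : ℝ) ≤ c * (inner ℝ x x : ℝ) := by
  rw [quad_repr hC, norm_repr hC, Finset.mul_sum]
  refine Finset.sum_le_sum fun j _ => ?_
  by_cases hj : j ∈ s
  · exact mul_le_mul_of_nonneg_right (hc j hj) (sq_nonneg _)
  · rw [coeff_zero hC s hx hj]; simp

lemma finrank_span_orthonormal {E : Type*} [NormedAddCommGroup E] [InnerProductSpace ℝ E]
    {ι : Type*} {v : ι → E} (hv : Orthonormal ℝ v) (s : Finset ι) :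
    Module.finrank ℝ (span ℝ (v '' ↑s)) = s.card := by
  have li : LinearIndependent ℝ (fun x : ↥(↑s : Set ι) => v ↑x) :=
    (hv.comp _ Subtype.val_injective).linearIndependent
  rw [Set.image_eq_range, finrank_span_eq_card li]
  simp

lemma exists_inter (S T : Submodule ℝ (EuclideanSpace ℝ (Fin N)))
    (h : N < Module.finrank ℝ S + Module.finrank ℝ T) :
    ∃ x, x ≠ 0 ∧ x ∈ S ∧ x ∈ T := by
  have h1 := Submodule.finrank_sup_add_finrank_inf_eq S T
  have h2 : Module.finrank ℝ ↥(S ⊔ T) ≤ N := by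
    simpa using Submodule.finrank_le (S ⊔ T)
  have h3 : S ⊓ T ≠ ⊥ := by
    intro hbot
    rw [hbot, finrank_bot] at h1
    omega
  obtain ⟨x, hx, hx0⟩ := Submodule.exists_mem_ne_zero_of_ne_bot h3
  exact ⟨x, hx0, hx.1, hx.2⟩

end helpers

section embed

variable {n m : ℕ}

noncomputable def Mmat (f : Fin m → Fin n) : Matrix (Fin n) (Fin m) ℝ :=
  Matrix.of fun k j => if f j = k then 1 else 0

lemma MtM (f : Fin m → Fin n) (hf : Function.Injective f) : (Mmat f)ᵀ * (Mmat f) = 1 := by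
  ext j l
  simp only [Matrix.mul_apply, Mmat, transpose_apply, Matrix.of_apply, Matrix.one_apply,
    ite_mul, one_mul, zero_mul]
  rw [Finset.sum_ite_eq Finset.univ (f j)]
  simp [hf.eq_iff, eq_comm]

lemma MtAM (f : Fin m → Fin n) (A : Matrix (Fin n) (Fin n) ℝ) :
    (Mmat f)ᵀ * A * (Mmat f) = A.submatrix f f := by
  ext j l
  simp only [Matrix.mul_apply, Mmat, transpose_apply, Matrix.of_apply, submatrix_apply,
    mul_ite, mul_one, mul_zero, ite_mul, one_mul, zero_mul]
  rw [Finset.sum_ite_eq Finset.univ (f l)]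
  simp only [Finset.mem_univ, if_true]
  rw [Finset.sum_ite_eq Finset.univ (f j)]
  simp

lemma mulVec_dot (M : Matrix (Fin n) (Fin m) ℝ) (y : Fin m → ℝ) (w : Fin n → ℝ) :
    (M *ᵥ y) ⬝ᵥ w = y ⬝ᵥ (Mᵀ *ᵥ w) := by
  rw [dotProduct_comm, dotProduct_mulVec, dotProduct_comm, mulVec_transpose]

lemma Pinner (f : Fin m → Fin n) (hf : Function.Injective f) (y z : EuclideanSpace ℝ (Fin m)) :
    (inner ℝ (Matrix.toEuclideanLin (Mmat f) y) (Matrix.toEuclideanLin (Mmat f) z) : ℝ)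
      = inner ℝ y z := by
  have h : ((Mmat f : Matrix (Fin n) (Fin m) ℝ) *ᵥ y) ⬝ᵥ ((Mmat f) *ᵥ z) = y ⬝ᵥ z := by
    rw [mulVec_dot, mulVec_mulVec, MtM f hf, one_mulVec]
  simpa [Matrix.toEuclideanLin_apply, PiLp.inner_apply, dotProduct, mul_comm] using h

lemma PquadA (f : Fin m → Fin n) (A : Matrix (Fin n) (Fin n) ℝ) (y z : EuclideanSpace ℝ (Fin m)) :
    (inner ℝ (Matrix.toEuclideanLin (Mmat f) y)
      (Matrix.toEuclideanLin A (Matrix.toEuclideanLin (Mmat f) z)) : ℝ)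
      = inner ℝ y (Matrix.toEuclideanLin (A.submatrix f f) z) := by
  have h : ((Mmat f : Matrix (Fin n) (Fin m) ℝ) *ᵥ y) ⬝ᵥ (A *ᵥ ((Mmat f) *ᵥ z))
      = y ⬝ᵥ ((A.submatrix f f) *ᵥ z) := by
    rw [mulVec_dot, mulVec_mulVec, mulVec_mulVec, MtAM f A]
  simpa [Matrix.toEuclideanLin_apply, PiLp.inner_apply, dotProduct, mul_comm] using h

end embed
theorem interlace_le {n m : ℕ} (A : Matrix (Fin n) (Fin n) ℝ) (hA : A.IsHermitian)
    (f : Fin m → Fin n) (hf : Function.Injective f) (hB : (A.submatrix f f).IsHermitian)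
    (c d : ℝ) (sB : Finset (Fin m)) (sA : Finset (Fin n))
    (hcard : n < sB.card + sA.card)
    (hc : ∀ j ∈ sB, c ≤ hB.eigenvalues j)
    (hd : ∀ j ∈ sA, hA.eigenvalues j ≤ d) : c ≤ d := by
  set P := Matrix.toEuclideanLin (Mmat f) with hP
  have orthPW : Orthonormal ℝ (⇑P ∘ hB.eigenvectorBasis) := by
    rw [orthonormal_iff_ite]
    intro i j
    rw [Function.comp_apply, Function.comp_apply, hP, Pinner f hf]
    exact orthonormal_iff_ite.mp hB.eigenvectorBasis.orthonormal i j
  set S := span ℝ ((⇑P ∘ hB.eigenvectorBasis) '' ↑sB) with hS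
  set T := span ℝ (hA.eigenvectorBasis '' ↑sA) with hT
  have hrS : Module.finrank ℝ S = sB.card := finrank_span_orthonormal orthPW sB
  have hrT : Module.finrank ℝ T = sA.card :=
    finrank_span_orthonormal hA.eigenvectorBasis.orthonormal sA
  obtain ⟨x, hx0, hxS, hxT⟩ := exists_inter S T (by omega)
  rw [hS, Set.image_comp, Submodule.span_image] at hxS
  obtain ⟨y, hy, rfl⟩ := hxS
  have h1 : c * (inner ℝ y y : ℝ) ≤ (inner ℝ y (Matrix.toEuclideanLin (A.submatrix f f) y) : ℝ) :=
    quad_ge hB sB c hc hy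
  have h2 : (inner ℝ (P y) (Matrix.toEuclideanLin A (P y)) : ℝ) ≤ d * (inner ℝ (P y) (P y) : ℝ) :=
    quad_le hA sA d hd hxT
  rw [← PquadA f A y y] at h1
  rw [← Pinner f hf y y] at h1
  have hpos : (0 : ℝ) < inner ℝ (P y) (P y) := by
    rw [real_inner_self_eq_norm_sq]
    exact pow_pos (norm_pos_iff.mpr hx0) 2
  have := h1.trans h2
  exact le_of_mul_le_mul_right this hpos

theorem interlace_ge {n m : ℕ} (A : Matrix (Fin n) (Fin n) ℝ) (hA : A.IsHermitian)
    (f : Fin m → Fin n) (hf : Function.Injective f) (hB : (A.submatrix f f).IsHermitian)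
    (c d : ℝ) (sB : Finset (Fin m)) (sA : Finset (Fin n))
    (hcard : n < sB.card + sA.card)
    (hc : ∀ j ∈ sB, hB.eigenvalues j ≤ d)
    (hd : ∀ j ∈ sA, c ≤ hA.eigenvalues j) : c ≤ d := by
  set P := Matrix.toEuclideanLin (Mmat f) with hP
  have orthPW : Orthonormal ℝ (⇑P ∘ hB.eigenvectorBasis) := by
    rw [orthonormal_iff_ite]
    intro i j
    rw [Function.comp_apply, Function.comp_apply, hP, Pinner f hf]
    exact orthonormal_iff_ite.mp hB.eigenvectorBasis.orthonormal i j
  set S := span ℝ ((⇑P ∘ hB.eigenvectorBasis) '' ↑sB) with hS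
  set T := span ℝ (hA.eigenvectorBasis '' ↑sA) with hT
  have hrS : Module.finrank ℝ S = sB.card := finrank_span_orthonormal orthPW sB
  have hrT : Module.finrank ℝ T = sA.card :=
    finrank_span_orthonormal hA.eigenvectorBasis.orthonormal sA
  obtain ⟨x, hx0, hxS, hxT⟩ := exists_inter S T (by omega)
  rw [hS, Set.image_comp, Submodule.span_image] at hxS
  obtain ⟨y, hy, rfl⟩ := hxS
  have h1 : (inner ℝ y (Matrix.toEuclideanLin (A.submatrix f f) y) : ℝ) ≤ d * (inner ℝ y y : ℝ) :=
    quad_le hB sB d hc hy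
  have h2 : c * (inner ℝ (P y) (P y) : ℝ) ≤ (inner ℝ (P y) (Matrix.toEuclideanLin A (P y)) : ℝ) :=
    quad_ge hA sA c hd hxT
  rw [← PquadA f A y y] at h1
  rw [← Pinner f hf y y] at h1
  have hpos : (0 : ℝ) < inner ℝ (P y) (P y) := by
    rw [real_inner_self_eq_norm_sq]
    exact pow_pos (norm_pos_iff.mpr hx0) 2
  have := h2.trans h1
  exact le_of_mul_le_mul_right this hpos

theorem stmt_4 {n m : ℕ} (hmn : m < n) (A : Matrix (Fin n) (Fin n) ℝ)
    (hA : A.IsHermitian) (f : Fin m → Fin n) (hf : Function.Injective f)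
    (hB : (A.submatrix f f).IsHermitian)
    (σA : Equiv.Perm (Fin n)) (σB : Equiv.Perm (Fin m))
    (hσA : ∀ i j : Fin n, i ≤ j → hA.eigenvalues (σA j) ≤ hA.eigenvalues (σA i))
    (hσB : ∀ i j : Fin m, i ≤ j → hB.eigenvalues (σB j) ≤ hB.eigenvalues (σB i)) :
    ∀ i : Fin m,
      hB.eigenvalues (σB i) ≤ hA.eigenvalues (σA (Fin.castLE hmn.le i)) ∧
      hA.eigenvalues (σA ⟨n - m + i.val, by have := i.isLt; omega⟩) ≤ hB.eigenvalues (σB i) := by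
  intro i
  have him : i.val < m := i.isLt
  constructor
  · refine interlace_le A hA f hf hB _ _ ((Finset.Iic i).image σB)
      ((Finset.Ici (Fin.castLE hmn.le i)).image σA) ?_ ?_ ?_
    · rw [Finset.card_image_of_injective _ σB.injective,
        Finset.card_image_of_injective _ σA.injective, Fin.card_Iic, Fin.card_Ici]
      simp only [Fin.coe_castLE]
      omega
    · intro j hj
      obtain ⟨j', hj', rfl⟩ := Finset.mem_image.mp hj
      exact hσB j' i (Finset.mem_Iic.mp hj')
    · intro j hj
      obtain ⟨j', hj', rfl⟩ := Finset.mem_image.mp hj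
      exact hσA (Fin.castLE hmn.le i) j' (Finset.mem_Ici.mp hj')
  · refine interlace_ge A hA f hf hB _ _ ((Finset.Ici i).image σB)
      ((Finset.Iic (⟨n - m + i.val, by omega⟩ : Fin n)).image σA) ?_ ?_ ?_
    · rw [Finset.card_image_of_injective _ σB.injective,
        Finset.card_image_of_injective _ σA.injective, Fin.card_Ici, Fin.card_Iic]
      simp only []
      omega
    · intro j hj
      obtain ⟨j', hj', rfl⟩ := Finset.mem_image.mp hj
      exact hσB i j' (Finset.mem_Ici.mp hj')
    · intro j hj
      obtain ⟨j', hj', rfl⟩ := Finset.mem_image.mp hj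
      exact hσA j' _ (Finset.mem_Iic.mp hj')
end

section
/- Let Σ ⊆ O × S be a set of k pairs between two k-element facility sets O and S such that every o ∈ O appears in exactly one pair and every s ∈ S appears in at most two pairs. Then ∑_{(o_i,s_j)∈Σ} ∑_{s∈S} d(s_j, s) ≥ g(S), where g(S) = (1/2)∑_{x∈S}∑_{y∈S} d(x,y). -/
theorem stmt_13 {X : Type*} [MetricSpace X] [DecidableEq X] {k : ℕ}
    (O S : Finset X) (hO : O.card = k) (hS : S.card = k)
    (Sg : Finset (X × X)) (hsub : Sg ⊆ O ×ˢ S) (hcard : Sg.card = k)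
    (h1 : ∀ o ∈ O, (Sg.filter (fun p => p.1 = o)).card = 1)
    (h2 : ∀ s ∈ S, (Sg.filter (fun p => p.2 = s)).card ≤ 2) :
    (1 / 2) * ∑ u ∈ S, ∑ v ∈ S, dist u v ≤ ∑ p ∈ Sg, ∑ s ∈ S, dist p.2 s := by
  rcases Nat.eq_zero_or_pos k with hk | hk
  · have hSe : S = ∅ := Finset.card_eq_zero.mp (hS.trans hk)
    have hSge : Sg = ∅ := Finset.card_eq_zero.mp (hcard.trans hk)
    simp [hSe, hSge]
  · have key : (k : ℝ) * ∑ u ∈ S, ∑ v ∈ S, dist u v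
        ≤ (k : ℝ) * (2 * ∑ p ∈ Sg, ∑ s ∈ S, dist p.2 s) := by
      calc (k : ℝ) * ∑ u ∈ S, ∑ v ∈ S, dist u v
          = ∑ u ∈ S, ∑ v ∈ S, ∑ p ∈ Sg, dist u v := by
            simp [Finset.sum_const, hcard, Finset.mul_sum, Finset.sum_mul, mul_comm]
        _ ≤ ∑ u ∈ S, ∑ v ∈ S, ∑ p ∈ Sg, (dist u p.2 + dist p.2 v) := by
            gcongr with u hu v hv p hp
            exact dist_triangle u p.2 v
        _ = ∑ u ∈ S, ∑ v ∈ S, ∑ p ∈ Sg, dist u p.2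
            + ∑ u ∈ S, ∑ v ∈ S, ∑ p ∈ Sg, dist p.2 v := by
            simp [Finset.sum_add_distrib]
        _ = (k : ℝ) * (∑ p ∈ Sg, ∑ s ∈ S, dist p.2 s)
            + (k : ℝ) * (∑ p ∈ Sg, ∑ s ∈ S, dist p.2 s) := by
            congr 1
            · calc ∑ u ∈ S, ∑ v ∈ S, ∑ p ∈ Sg, dist u p.2
                  = ∑ u ∈ S, (k : ℝ) * ∑ p ∈ Sg, dist u p.2 := by
                    refine Finset.sum_congr rfl fun u hu => ?_
                    rw [Finset.sum_const, nsmul_eq_mul, hS]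
                _ = (k : ℝ) * ∑ p ∈ Sg, ∑ s ∈ S, dist p.2 s := by
                    rw [← Finset.mul_sum, Finset.sum_comm]
                    simp [dist_comm]
            · rw [Finset.sum_const, nsmul_eq_mul, hS, Finset.sum_comm]
        _ = (k : ℝ) * (2 * ∑ p ∈ Sg, ∑ s ∈ S, dist p.2 s) := by ring
    have hkpos : (0 : ℝ) < k := by exact_mod_cast hk
    have := (mul_le_mul_iff_right₀ hkpos).mp key
    linarith
end
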